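/- Let n be a positive integer divisible by 3 and let f be the partial Approximate-Majority function on {0,1}^n, defined by f(x) = 0 if the Hamming weight |x| ≤ n/3 and f(x) = 1 if |x| ≥ 2n/3 (and undefined otherwise). Then every deterministic decision tree computing f has rank at least n/3; consequently rank(f) ≥ n/3 (and rank(f) = Θ(n)). -/
import Mathlib


/-- A deterministic decision tree over `{0,1}^n`: every internal node is labeled
by a query index `i ∈ Fin n` and has exactly two children (a 0-child and a
1-child); every leaf is labeled by an output value. -/
inductive DTree (n : ℕ) : Type where
  | leaf (b : Bool) : DTree n
  | node (i : Fin n) (t0 t1 : DTree n) : DTree n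

namespace DTree

/-- On input `x`, from each internal node labeled `i` follow the edge to the
`x i`-child; output the label of the leaf reached. -/
def eval {n : ℕ} : DTree n → (Fin n → Bool) → Bool
  | leaf b, _ => b
  | node i t0 t1, x => if x i then t1.eval x else t0.eval x

/-- `DTSize`: the total number of nodes of the tree. -/
def size {n : ℕ} : DTree n → ℕ
  | leaf _ => 1
  | node _ t0 t1 => 1 + t0.size + t1.size

/-- The depth: the maximum number of edges on a root-to-leaf path. -/
def depth {n : ℕ} : DTree n → ℕ
  | leaf _ => 0
  | node _ t0 t1 => 1 + max t0.depth t1.depth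

/-- The rank of a binary tree: a leaf has rank 0; an internal node whose two
children have ranks `r₁, r₂` has rank `max r₁ r₂` if `r₁ ≠ r₂`, and `r₁ + 1`
if `r₁ = r₂`. -/
def rank {n : ℕ} : DTree n → ℕ
  | leaf _ => 0
  | node _ t0 t1 => if t0.rank = t1.rank then t0.rank + 1 else max t0.rank t1.rank

end DTree

/-- The decision tree `t` computes the total Boolean function `f`. -/
def ComputesFn {n : ℕ} (t : DTree n) (f : (Fin n → Bool) → Bool) : Prop :=
  ∀ x, t.eval x = f x

/-- The Hamming weight `|x|` of `x ∈ {0,1}^n`. -/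
def hammingWeight {n : ℕ} (x : Fin n → Bool) : ℕ :=
  (Finset.univ.filter fun i => x i = true).card

namespace ApproxMajAux

def zcount {n : ℕ} (ρ : Fin n → Option Bool) : ℕ :=
  (Finset.univ.filter fun i => ρ i = some false).card

def ocount {n : ℕ} (ρ : Fin n → Option Bool) : ℕ :=
  (Finset.univ.filter fun i => ρ i = some true).card

lemma weight_all0 {n : ℕ} (ρ : Fin n → Option Bool) :
    hammingWeight (fun i => (ρ i).getD false) = ocount ρ := by
  unfold hammingWeight ocount
  congr 1
  apply Finset.filter_congr
  intro i _
  cases h : ρ i with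
  | none => simp [h]
  | some c => cases c <;> simp [h]

lemma weight_all1 {n : ℕ} (ρ : Fin n → Option Bool) :
    hammingWeight (fun i => (ρ i).getD true) + zcount ρ = n := by
  unfold hammingWeight zcount
  beta_reduce
  have h := Finset.card_filter_add_card_filter_not
    (s := (Finset.univ : Finset (Fin n))) (p := fun i => (ρ i).getD true = true)
  simp only [Finset.card_univ, Fintype.card_fin] at h
  have h2 : (Finset.univ.filter fun a => ¬(ρ a).getD true = true).card
      = (Finset.univ.filter fun i => ρ i = some false).card := by
    congr 1
    apply Finset.filter_congr
    intro i _
    cases hi : ρ i with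
    | none => simp [hi]
    | some c => cases c <;> simp [hi]
  omega

lemma main {n : ℕ} (m : ℕ) (hm : n = 3 * m) (t : DTree n) :
    ∀ ρ : Fin n → Option Bool,
      (∀ x : Fin n → Bool, (∀ i b, ρ i = some b → x i = b) →
        (3 * hammingWeight x ≤ n → t.eval x = false) ∧
        (2 * n ≤ 3 * hammingWeight x → t.eval x = true)) →
      m ≤ max (zcount ρ) (ocount ρ) + t.rank := by
  induction t with
  | leaf b =>
    intro ρ H
    by_contra hlt
    push_neg at hlt
    have hz : zcount ρ < m := by simp [DTree.rank] at hlt; omega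
    have ho : ocount ρ < m := by simp [DTree.rank] at hlt; omega
    -- all-zero extension
    have c0 : ∀ i b', ρ i = some b' → (ρ i).getD false = b' := by
      intro i b' h; simp [h]
    have c1 : ∀ i b', ρ i = some b' → (ρ i).getD true = b' := by
      intro i b' h; simp [h]
    have h0 := (H _ c0).1 (by rw [weight_all0]; omega)
    have h1 := (H _ c1).2 (by
      have := weight_all1 ρ
      omega)
    simp [DTree.eval] at h0 h1
    rw [h0] at h1; exact Bool.false_ne_true h1
  | node i t0 t1 ih0 ih1 =>
    intro ρ H
    have rank_ge : ∀ r : ℕ, (r = t0.rank ∨ r = t1.rank) → r ≤ (DTree.node i t0 t1).rank := by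
      intro r hr
      simp only [DTree.rank]
      split
      · rcases hr with h | h <;> omega
      · rcases hr with h | h
        · exact h ▸ le_max_left _ _
        · exact h ▸ le_max_right _ _
    cases hρi : ρ i with
    | some b =>
      cases b with
      | false =>
        have H0 : ∀ x : Fin n → Bool, (∀ j b', ρ j = some b' → x j = b') →
            (3 * hammingWeight x ≤ n → t0.eval x = false) ∧
            (2 * n ≤ 3 * hammingWeight x → t0.eval x = true) := by
          intro x hx
          have hxi : x i = false := hx i false hρi
          have := H x hx
          simpa [DTree.eval, hxi] using this
        exact le_trans (ih0 ρ H0) (by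
          have := rank_ge t0.rank (Or.inl rfl); omega)
      | true =>
        have H1 : ∀ x : Fin n → Bool, (∀ j b', ρ j = some b' → x j = b') →
            (3 * hammingWeight x ≤ n → t1.eval x = false) ∧
            (2 * n ≤ 3 * hammingWeight x → t1.eval x = true) := by
          intro x hx
          have hxi : x i = true := hx i true hρi
          have := H x hx
          simpa [DTree.eval, hxi] using this
        exact le_trans (ih1 ρ H1) (by
          have := rank_ge t1.rank (Or.inr rfl); omega)
    | none =>
      set ρ0 := Function.update ρ i (some false) with hρ0
      set ρ1 := Function.update ρ i (some true) with hρ1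
      have hmemz : i ∉ Finset.univ.filter fun j => ρ j = some false := by
        simp [hρi]
      have hmemo : i ∉ Finset.univ.filter fun j => ρ j = some true := by
        simp [hρi]
      have hz0 : zcount ρ0 = zcount ρ + 1 := by
        unfold zcount
        have : (Finset.univ.filter fun j => ρ0 j = some false)
            = insert i (Finset.univ.filter fun j => ρ j = some false) := by
          ext j
          by_cases hj : j = i <;> simp [hρ0, Function.update, hj, hρi]
        rw [this, Finset.card_insert_of_notMem hmemz]
      have ho0 : ocount ρ0 = ocount ρ := by
        unfold ocount
        congr 1
        ext j
        by_cases hj : j = i <;> simp [hρ0, Function.update, hj, hρi]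
      have hz1 : zcount ρ1 = zcount ρ := by
        unfold zcount
        congr 1
        ext j
        by_cases hj : j = i <;> simp [hρ1, Function.update, hj, hρi]
      have ho1 : ocount ρ1 = ocount ρ + 1 := by
        unfold ocount
        have : (Finset.univ.filter fun j => ρ1 j = some true)
            = insert i (Finset.univ.filter fun j => ρ j = some true) := by
          ext j
          by_cases hj : j = i <;> simp [hρ1, Function.update, hj, hρi]
        rw [this, Finset.card_insert_of_notMem hmemo]
      have H0 : ∀ x : Fin n → Bool, (∀ j b', ρ0 j = some b' → x j = b') →
          (3 * hammingWeight x ≤ n → t0.eval x = false) ∧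
          (2 * n ≤ 3 * hammingWeight x → t0.eval x = true) := by
        intro x hx
        have hxi : x i = false := hx i false (by simp [hρ0, Function.update])
        have hcons : ∀ j b', ρ j = some b' → x j = b' := by
          intro j b' hj
          apply hx
          by_cases hji : j = i
          · subst hji; rw [hρi] at hj; exact absurd hj (by simp)
          · simp [hρ0, Function.update, hji, hj]
        have := H x hcons
        simpa [DTree.eval, hxi] using this
      have H1 : ∀ x : Fin n → Bool, (∀ j b', ρ1 j = some b' → x j = b') →
          (3 * hammingWeight x ≤ n → t1.eval x = false) ∧
          (2 * n ≤ 3 * hammingWeight x → t1.eval x = true) := by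
        intro x hx
        have hxi : x i = true := hx i true (by simp [hρ1, Function.update])
        have hcons : ∀ j b', ρ j = some b' → x j = b' := by
          intro j b' hj
          apply hx
          by_cases hji : j = i
          · subst hji; rw [hρi] at hj; exact absurd hj (by simp)
          · simp [hρ1, Function.update, hji, hj]
        have := H x hcons
        simpa [DTree.eval, hxi] using this
      have k0 := ih0 ρ0 H0
      have k1 := ih1 ρ1 H1
      rw [hz0, ho0] at k0
      rw [hz1, ho1] at k1
      have hrank : min t0.rank t1.rank + 1 ≤ (DTree.node i t0 t1).rank := by
        simp only [DTree.rank]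
        split <;> omega
      have hmax0 : max (zcount ρ + 1) (ocount ρ) ≤ max (zcount ρ) (ocount ρ) + 1 := by omega
      have hmax1 : max (zcount ρ) (ocount ρ + 1) ≤ max (zcount ρ) (ocount ρ) + 1 := by omega
      omega

end ApproxMajAux

/-- For `n > 0` divisible by 3, every deterministic decision
tree computing the partial Approximate-Majority function on `{0,1}^n`
(output `0` if `|x| ≤ n/3`, output `1` if `|x| ≥ 2n/3`, undefined otherwise)
has rank at least `n/3`; consequently `rank(f) ≥ n/3`. -/



theorem approxMaj_rank_lower_bound {n : ℕ} (hn : 0 < n) (h3 : 3 ∣ n)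
    (t : DTree n)
    (hzero : ∀ x : Fin n → Bool, 3 * hammingWeight x ≤ n → t.eval x = false)
    (hone : ∀ x : Fin n → Bool, 2 * n ≤ 3 * hammingWeight x → t.eval x = true) :
    n / 3 ≤ t.rank := by
  have hm : n = 3 * (n / 3) := (Nat.mul_div_cancel' h3).symm
  have := ApproxMajAux.main (n / 3) hm t (fun _ => none)
    (by intro x _; exact ⟨hzero x, hone x⟩)
  simpa [ApproxMajAux.zcount, ApproxMajAux.ocount] using this
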